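/- Let E be a Banach space with closed unit ball B. If B endowed with the weak topology is first countable, then B with the weak topology is metrizable. -/

import Mathlib

open Filter Topology Set Uniformity

/-- Proposition 4.5: if the closed unit ball of a Banach space is first countable in the weak
topology, then it is metrizable in the weak topology. -/
theorem ball_weak_metrizable_of_firstCountable
    {E : Type*} [NormedAddCommGroup E] [NormedSpace ℝ E] [CompleteSpace E]
    [FirstCountableTopology {x : WeakSpace ℝ E // ‖(toWeakSpace ℝ E).symm x‖ ≤ 1}] :
    TopologicalSpace.MetrizableSpace
      {x : WeakSpace ℝ E // ‖(toWeakSpace ℝ E).symm x‖ ≤ 1} := by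
  -- T2 for the weak topology, from Hahn–Banach.
  haveI hT2 : T2Space (WeakSpace ℝ E) := by
    refine (WeakBilin.isEmbedding (B := (topDualPairing ℝ E).flip) ?_).t2Space
    intro x y hxy
    rw [← sub_eq_zero]
    apply NormedSpace.eq_zero_of_forall_dual_eq_zero ℝ
    intro f
    have := congrFun (congrArg DFunLike.coe hxy) f
    simp only [LinearMap.flip_apply] at this
    simp [topDualPairing] at this ⊢
    simp [map_sub, this]
  haveI : ContinuousSMul ℝ (WeakSpace ℝ E) :=
    WeakBilin.instContinuousSMul ((topDualPairing ℝ E).flip)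
  letI : UniformSpace (WeakSpace ℝ E) := IsTopologicalAddGroup.rightUniformSpace _
  haveI : IsUniformAddGroup (WeakSpace ℝ E) := isUniformAddGroup_of_addCommGroup
  set T := {x : WeakSpace ℝ E // ‖(toWeakSpace ℝ E).symm x‖ ≤ 1} with hT
  have h0 : ‖(toWeakSpace ℝ E).symm (0 : WeakSpace ℝ E)‖ ≤ 1 := by simp
  set z : T := ⟨0, h0⟩ with hz
  -- the map sending a pair (x, y) in T × T to (y - x)/2 ∈ T
  have hmem : ∀ p : T × T,
      ‖(toWeakSpace ℝ E).symm ((2 : ℝ)⁻¹ • ((p.2 : WeakSpace ℝ E) - p.1))‖ ≤ 1 := by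
    rintro ⟨⟨x, hx⟩, ⟨y, hy⟩⟩
    simp only [map_smul, map_sub, norm_smul]
    calc ‖(2:ℝ)⁻¹‖ * ‖(toWeakSpace ℝ E).symm y - (toWeakSpace ℝ E).symm x‖
        ≤ (2:ℝ)⁻¹ * (‖(toWeakSpace ℝ E).symm y‖ + ‖(toWeakSpace ℝ E).symm x‖) := by
          rw [norm_inv, Real.norm_ofNat]
          gcongr
          exact norm_sub_le _ _
      _ ≤ (2:ℝ)⁻¹ * (1 + 1) := by gcongr
      _ = 1 := by norm_num
  set f : T × T → T := fun p => ⟨(2 : ℝ)⁻¹ • ((p.2 : WeakSpace ℝ E) - p.1), hmem p⟩ with hf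
  have key : 𝓤 T = comap f (𝓝 z) := by
    rw [uniformity_subtype, uniformity_eq_comap_nhds_zero (WeakSpace ℝ E), comap_comap,
      nhds_induced, comap_comap]
    have hsmul : comap (fun x : WeakSpace ℝ E => (2 : ℝ)⁻¹ • x) (𝓝 0)
        = 𝓝 (0 : WeakSpace ℝ E) := by
      have h := (Homeomorph.smulOfNeZero (G₀ := ℝ) (2:ℝ)⁻¹ (by norm_num)
        (α := WeakSpace ℝ E)).comap_nhds_eq (0 : WeakSpace ℝ E)
      simpa using h
    calc comap ((fun p : WeakSpace ℝ E × WeakSpace ℝ E => p.2 - p.1) ∘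
            fun q : T × T => ((q.1 : WeakSpace ℝ E), (q.2 : WeakSpace ℝ E))) (𝓝 0)
        = comap (fun q : T × T => ((q.2 : WeakSpace ℝ E) - q.1)) (𝓝 0) := rfl
      _ = comap (fun q : T × T => ((q.2 : WeakSpace ℝ E) - q.1))
            (comap (fun x : WeakSpace ℝ E => (2 : ℝ)⁻¹ • x) (𝓝 0)) := by rw [hsmul]
      _ = comap ((Subtype.val : T → WeakSpace ℝ E) ∘ f) (𝓝 (z : WeakSpace ℝ E)) := by
          rw [comap_comap]
          rfl
  haveI : (𝓤 T).IsCountablyGenerated := by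
    rw [key]
    exact Filter.comap.isCountablyGenerated _ _
  exact UniformSpace.metrizableSpace
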